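/- arXiv:1208.5408 — 3 statements merged into one kernel-verified Lean document; each statement's English description precedes it below -/
import Mathlib

section
/- Let μ be a probability measure on [0,2π) with ∫₀^{2π} e^{ix} dμ(x) = 0, and let F be its cumulative distribution function with generalized inverse F⁻¹. Define Z(t) = ∫₀^t exp(i F⁻¹(u)) du for t ∈ [0,1]. Then the imaginary part y(t) = Im Z(t) satisfies y(0) = y(1) = 0 and y(t) ≥ 0 for all t ∈ [0,1]. -/
open MeasureTheory Real Set

/-- Cumulative distribution function `F_μ(x) = μ([0,x])`. -/
noncomputable def cdf' (μ : Measure ℝ) (x : ℝ) : ℝ := (μ (Set.Icc 0 x)).toReal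

/-- Generalized inverse `F_μ⁻¹(y) = inf {x ≥ 0 : F_μ(x) ≥ y}`. -/
noncomputable def qf (μ : Measure ℝ) (y : ℝ) : ℝ := sInf {x : ℝ | 0 ≤ x ∧ y ≤ cdf' μ x}

/-- The curve `Z_μ(t) = ∫₀^t exp(i F_μ⁻¹(u)) du`. -/
noncomputable def Zc (μ : Measure ℝ) (t : ℝ) : ℂ :=
  ∫ u in (0:ℝ)..t, Complex.exp (Complex.I * (qf μ u))

section Aux

variable (μ : Measure ℝ) [IsProbabilityMeasure μ]

lemma cdf'_nonneg (x : ℝ) : 0 ≤ cdf' μ x := ENNReal.toReal_nonneg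

lemma cdf'_mono {x y : ℝ} (h : x ≤ y) : cdf' μ x ≤ cdf' μ y :=
  ENNReal.toReal_mono (measure_ne_top μ _) (measure_mono (Icc_subset_Icc le_rfl h))

lemma cdf'_le_one (x : ℝ) : cdf' μ x ≤ 1 := by
  have h : (μ (Set.Icc 0 x)).toReal ≤ (μ Set.univ).toReal :=
    ENNReal.toReal_mono (measure_ne_top μ _) (measure_mono (subset_univ _))
  simpa [cdf'] using h

lemma meas_Icc_eq_one (hsupp : μ (Set.Ico 0 (2*π))ᶜ = 0) {x : ℝ} (hx : 2*π ≤ x) :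
    cdf' μ x = 1 := by
  have hsub : Set.univ ⊆ Set.Icc 0 x ∪ (Set.Ico 0 (2*π))ᶜ := by
    intro z _
    by_cases hz : z ∈ Set.Ico 0 (2*π)
    · exact Or.inl ⟨hz.1, le_trans hz.2.le hx⟩
    · exact Or.inr hz
  have h1 : (1:ENNReal) ≤ μ (Set.Icc 0 x) := by
    calc (1:ENNReal) = μ Set.univ := by simp
    _ ≤ μ (Set.Icc 0 x ∪ (Set.Ico 0 (2*π))ᶜ) := measure_mono hsub
    _ ≤ μ (Set.Icc 0 x) + μ (Set.Ico 0 (2*π))ᶜ := measure_union_le _ _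
    _ = μ (Set.Icc 0 x) := by rw [hsupp, add_zero]
  have h2 : μ (Set.Icc 0 x) = 1 := le_antisymm prob_le_one h1
  simp [cdf', h2]

lemma qf_nonneg (y : ℝ) : 0 ≤ qf μ y := Real.sInf_nonneg fun _ hx => hx.1

lemma qf_bddBelow (y : ℝ) : BddBelow {x : ℝ | 0 ≤ x ∧ y ≤ cdf' μ x} :=
  ⟨0, fun _ hx => hx.1⟩

lemma qf_le {y x : ℝ} (hx : 0 ≤ x) (h : y ≤ cdf' μ x) : qf μ y ≤ x :=
  csInf_le (qf_bddBelow μ y) ⟨hx, h⟩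

lemma qf_set_nonempty (hsupp : μ (Set.Ico 0 (2*π))ᶜ = 0) {y : ℝ} (hy : y ≤ 1) :
    {x : ℝ | 0 ≤ x ∧ y ≤ cdf' μ x}.Nonempty :=
  ⟨2*π, by positivity, by rw [meas_Icc_eq_one μ hsupp le_rfl]; exact hy⟩

lemma qf_le_two_pi (hsupp : μ (Set.Ico 0 (2*π))ᶜ = 0) {y : ℝ} (hy : y ≤ 1) :
    qf μ y ≤ 2*π :=
  qf_le μ (by positivity) (by rw [meas_Icc_eq_one μ hsupp le_rfl]; exact hy)

/-- The hard Galois direction, using right continuity of the cdf. -/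
lemma le_cdf'_of_qf_le (hsupp : μ (Set.Ico 0 (2*π))ᶜ = 0) {y x : ℝ}
    (hy : y ≤ 1) (hqf : qf μ y ≤ x) : y ≤ cdf' μ x := by
  have key : ∀ ε : ℝ, 0 < ε → y ≤ cdf' μ (x + ε) := by
    intro ε hε
    obtain ⟨x', hx', hlt⟩ := Real.lt_sInf_add_pos (qf_set_nonempty μ hsupp hy) hε
    have hlt' : x' < qf μ y + ε := hlt
    exact hx'.2.trans (cdf'_mono μ (by linarith))
  have hiInter : ⋂ n : ℕ, Set.Icc (0:ℝ) (x + 1/(n+1)) = Set.Icc 0 x := by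
    ext z
    simp only [Set.mem_iInter, Set.mem_Icc]
    constructor
    · intro h
      refine ⟨(h 0).1, le_of_forall_pos_le_add fun ε hε => ?_⟩
      obtain ⟨n, hn⟩ := exists_nat_one_div_lt hε
      exact (h n).2.trans (by linarith)
    · intro h n
      have hpos : (0:ℝ) < 1/(n+1) := by positivity
      exact ⟨h.1, h.2.trans (by linarith)⟩
  have htend : Filter.Tendsto (fun n : ℕ => μ (Set.Icc 0 (x + 1/(n+1)))) Filter.atTop
      (nhds (μ (Set.Icc 0 x))) := by
    rw [← hiInter]
    refine tendsto_measure_iInter_atTop (fun n => measurableSet_Icc.nullMeasurableSet) ?_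
      ⟨0, measure_ne_top μ _⟩
    intro m n hmn
    apply Set.Icc_subset_Icc le_rfl
    have hmn' : (m:ℝ) ≤ n := Nat.cast_le.mpr hmn
    have : (1:ℝ)/(n+1) ≤ 1/(m+1) := by
      apply one_div_le_one_div_of_le (by positivity)
      linarith
    linarith
  have hle : ENNReal.ofReal y ≤ μ (Set.Icc 0 x) := by
    refine ge_of_tendsto htend (Filter.Eventually.of_forall fun n => ?_)
    exact ENNReal.ofReal_le_of_le_toReal (key (1/(n+1)) (by positivity))
  by_cases hy0 : y ≤ 0
  · exact hy0.trans (cdf'_nonneg μ x)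
  · have := ENNReal.toReal_mono (measure_ne_top μ _) hle
    rwa [ENNReal.toReal_ofReal (le_of_not_ge hy0)] at this

lemma qf_mono_of_le_one {y y' : ℝ} (hsupp : μ (Set.Ico 0 (2*π))ᶜ = 0)
    (h : y ≤ y') (hy' : y' ≤ 1) : qf μ y ≤ qf μ y' :=
  csInf_le_csInf (qf_bddBelow μ y) (qf_set_nonempty μ hsupp hy')
    (fun x hx => ⟨hx.1, h.trans hx.2⟩)

end Aux

lemma intervalIntegral_im {f : ℝ → ℂ} {a b : ℝ} (hf : IntervalIntegrable f volume a b) :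
    (∫ u in a..b, f u).im = ∫ u in a..b, (f u).im := by
  have h1 := integral_im hf.1
  have h2 := integral_im hf.2
  simp only [RCLike.im_to_complex] at h1 h2
  simp [intervalIntegral, Complex.sub_im, h1, h2]

lemma intervalIntegrable_of_bounded {E : Type*} [NormedAddCommGroup E] {f : ℝ → E}
    (hf : AEStronglyMeasurable f volume) {C : ℝ} (h : ∀ u, ‖f u‖ ≤ C) (a b : ℝ) :
    IntervalIntegrable f volume a b := by
  constructor <;>
    exact Measure.integrableOn_of_bounded (by simp [measure_Ioc_lt_top.ne]) hf
      (Filter.Eventually.of_forall h)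

lemma sin_nonpos_of_pi_le {r : ℝ} (h1 : π ≤ r) (h2 : r ≤ 2*π) : Real.sin r ≤ 0 := by
  have := Real.sin_nonneg_of_nonneg_of_le_pi (x := r - π) (by linarith) (by linarith)
  rw [Real.sin_sub_pi] at this
  linarith

theorem stmt0 (μ : Measure ℝ) [IsProbabilityMeasure μ]
    (hsupp : μ (Set.Ico 0 (2*π))ᶜ = 0)
    (hclosed : ∫ x, Complex.exp (Complex.I * x) ∂μ = 0) :
    (Zc μ 0).im = 0 ∧ (Zc μ 1).im = 0 ∧ ∀ t ∈ Set.Icc (0:ℝ) 1, 0 ≤ (Zc μ t).im := by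
  -- the modified quantile function, monotone and measurable on all of ℝ
  set h : ℝ → ℝ := fun u => qf μ (min u 1) with hh
  have hmono : Monotone h := fun u v huv =>
    qf_mono_of_le_one μ hsupp (min_le_min huv le_rfl) (min_le_right v 1)
  have hmeas : Measurable h := hmono.measurable
  have hbound : ∀ u : ℝ, ‖Complex.exp (Complex.I * (h u))‖ ≤ 1 := by
    intro u
    rw [Complex.norm_exp]
    simp
  have hgmeas : Measurable fun u => Complex.exp (Complex.I * (h u)) :=
    Complex.measurable_exp.comp (measurable_const.mul (Complex.measurable_ofReal.comp hmeas))
  have hgint : ∀ a b : ℝ, IntervalIntegrable (fun u => Complex.exp (Complex.I * (h u)))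
      volume a b :=
    intervalIntegrable_of_bounded hgmeas.aestronglyMeasurable hbound
  have hsint : ∀ a b : ℝ, IntervalIntegrable (fun u => Real.sin (h u)) volume a b := by
    refine intervalIntegrable_of_bounded
      (Real.measurable_sin.comp hmeas).aestronglyMeasurable (C := 1) (fun u => ?_)
    simpa using Real.abs_sin_le_one (h u)
  -- pushforward of Lebesgue on (0,1] under h is μ
  have hmap : μ = Measure.map h (volume.restrict (Set.Ioc 0 1)) := by
    refine MeasureTheory.Measure.ext_of_Iic μ _ (fun a => ?_)
    rw [Measure.map_apply hmeas measurableSet_Iic,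
      Measure.restrict_apply (hmeas measurableSet_Iic)]
    by_cases ha : 0 ≤ a
    · have hset : h ⁻¹' Set.Iic a ∩ Set.Ioc 0 1 = Set.Ioc 0 (cdf' μ a) := by
        ext u
        simp only [Set.mem_inter_iff, Set.mem_preimage, Set.mem_Iic, Set.mem_Ioc]
        constructor
        · rintro ⟨hu, hu0, hu1⟩
          refine ⟨hu0, ?_⟩
          have : h u = qf μ u := by rw [hh]; simp [min_eq_left hu1]
          rw [this] at hu
          exact le_cdf'_of_qf_le μ hsupp hu1 hu
        · rintro ⟨hu0, hu1⟩
          have hu1' : u ≤ 1 := hu1.trans (cdf'_le_one μ a)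
          have : h u = qf μ u := by rw [hh]; simp [min_eq_left hu1']
          exact ⟨by rw [this]; exact qf_le μ ha hu1, hu0, hu1'⟩
      have hμa : μ (Set.Iic a) = μ (Set.Icc 0 a) := by
        refine le_antisymm ?_ (measure_mono (fun z hz => hz.2))
        calc μ (Set.Iic a) ≤ μ (Set.Icc 0 a ∪ (Set.Ico 0 (2*π))ᶜ) := by
              refine measure_mono (fun z hz => ?_)
              by_cases hz' : z ∈ Set.Ico 0 (2*π)
              · exact Or.inl ⟨hz'.1, hz⟩
              · exact Or.inr hz'
          _ ≤ μ (Set.Icc 0 a) + μ (Set.Ico 0 (2*π))ᶜ := measure_union_le _ _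
          _ = μ (Set.Icc 0 a) := by rw [hsupp, add_zero]
      rw [hset, hμa, Real.volume_Ioc]
      rw [show μ (Set.Icc 0 a) = ENNReal.ofReal (cdf' μ a) by
        rw [cdf', ENNReal.ofReal_toReal (measure_ne_top μ _)]]
      congr 1
      simp
    · have h1 : μ (Set.Iic a) = 0 := by
        refine measure_mono_null (fun z hz => ?_) hsupp
        intro hz'
        exact ha (le_trans hz'.1 hz)
      have h2 : h ⁻¹' Set.Iic a ∩ Set.Ioc 0 1 = ∅ := by
        ext u
        simp only [Set.mem_inter_iff, Set.mem_preimage, Set.mem_Iic, Set.mem_empty_iff_false,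
          iff_false, not_and]
        intro hu _
        exact ha ((qf_nonneg μ _).trans hu)
      rw [h1, h2, measure_empty]
  -- Zc in terms of h on [0,1]
  have hZc : ∀ t ∈ Set.Icc (0:ℝ) 1, Zc μ t = ∫ u in (0:ℝ)..t, Complex.exp (Complex.I * (h u)) := by
    intro t ht
    refine intervalIntegral.integral_congr (fun u hu => ?_)
    rw [Set.uIcc_of_le ht.1] at hu
    have : min u 1 = u := min_eq_left (hu.2.trans ht.2)
    rw [hh]
    simp [this]
  -- value at 1
  have hZ1 : Zc μ 1 = 0 := by
    rw [hZc 1 ⟨zero_le_one, le_rfl⟩, intervalIntegral.integral_of_le zero_le_one, ← hclosed,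
      hmap, integral_map hmeas.aemeasurable]
    exact (Complex.continuous_exp.comp
      (continuous_const.mul Complex.continuous_ofReal)).aestronglyMeasurable
  -- imaginary part as real integral
  have hy : ∀ t ∈ Set.Icc (0:ℝ) 1, (Zc μ t).im = ∫ u in (0:ℝ)..t, Real.sin (h u) := by
    intro t ht
    rw [hZc t ht, intervalIntegral_im (hgint 0 t)]
    refine intervalIntegral.integral_congr (fun u _ => ?_)
    rw [mul_comm, Complex.exp_ofReal_mul_I_im]
  have hy1 : (∫ u in (0:ℝ)..1, Real.sin (h u)) = 0 := by
    rw [← hy 1 ⟨zero_le_one, le_rfl⟩, hZ1]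
    simp
  refine ⟨by simp [Zc], by rw [hZ1]; simp, ?_⟩
  intro t ht
  rw [hy t ht]
  by_cases hc : t ≤ cdf' μ π
  · refine intervalIntegral.integral_nonneg ht.1 (fun u hu => ?_)
    show 0 ≤ Real.sin (qf μ (min u 1))
    refine Real.sin_nonneg_of_nonneg_of_le_pi (qf_nonneg μ _) ?_
    exact qf_le μ Real.pi_pos.le (le_trans (min_le_left u 1) (hu.2.trans hc))
  · push_neg at hc
    have hsplit := intervalIntegral.integral_add_adjacent_intervals (hsint 0 t) (hsint t 1)
    have hnp : (∫ u in t..(1:ℝ), Real.sin (h u)) ≤ 0 := by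
      have hnn : 0 ≤ ∫ u in t..(1:ℝ), -Real.sin (h u) := by
        refine intervalIntegral.integral_nonneg ht.2 (fun u hu => ?_)
        show 0 ≤ -Real.sin (qf μ (min u 1))
        have hu1 : u ≤ 1 := hu.2
        have hmin : min u 1 = u := min_eq_left hu1
        rw [hmin]
        refine neg_nonneg.mpr (sin_nonpos_of_pi_le ?_ (qf_le_two_pi μ hsupp hu1))
        by_contra hlt
        push_neg at hlt
        have hucdf := le_cdf'_of_qf_le μ hsupp hu1 hlt.le
        have hut : t ≤ u := hu.1
        linarith
      rw [intervalIntegral.integral_neg] at hnn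
      linarith
    rw [hy1] at hsplit
    linarith
end

section
/- Let μ, ν be probability measures on the circle ℝ/2πℤ with vanishing first Fourier coefficient (∫ e^{ix}dμ = ∫ e^{ix}dν = 0). Then A(μ ⋆ ν) ≥ max{A(μ), A(ν)}, where ⋆ is convolution on the circle and A is the area of the associated convex set of perimeter 1. -/
open MeasureTheory Real Set

/-- Wrap a real number into the interval [0, 2*pi) (reduction mod 2*pi). -/
noncomputable def wrap (x : ℝ) : ℝ := 2*π * Int.fract (x / (2*π))

/-- Convolution of measures on the circle, realised on [0, 2*pi). -/
noncomputable def cconv (μ ν : Measure ℝ) : Measure ℝ :=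
  Measure.map (fun p : ℝ × ℝ => wrap (p.1 + p.2)) (μ.prod ν)

/-- Fourier coefficient `a_k(μ) = (1/π) E[cos(k X_μ)]`. -/
noncomputable def aF (μ : Measure ℝ) (k : ℕ) : ℝ := (1/π) * ∫ x, Real.cos (k * x) ∂μ

/-- Fourier coefficient `b_k(μ) = (1/π) E[sin(k X_μ)]`. -/
noncomputable def bF (μ : Measure ℝ) (k : ℕ) : ℝ := (1/π) * ∫ x, Real.sin (k * x) ∂μ

/-- Hurwitz area: `A(μ) = 1/(4π) − (π/2) Σ_{k≥2} (a_k² + b_k²)/(k²−1)`. -/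
noncomputable def areaH (μ : Measure ℝ) : ℝ :=
  1/(4*π) - (π/2) * ∑' k : ℕ, (aF μ (k+2)^2 + bF μ (k+2)^2) / (((k:ℝ)+2)^2 - 1)

/-- Complex Fourier coefficient. -/
noncomputable def cF (μ : Measure ℝ) (n : ℕ) : ℂ :=
  ∫ x, Complex.exp ((n * x : ℝ) * Complex.I) ∂μ

lemma norm_exp_eq (r : ℝ) : ‖Complex.exp ((r:ℂ) * Complex.I)‖ = 1 := by
  exact Complex.norm_exp_ofReal_mul_I r

lemma cf_cont (n : ℕ) : Continuous (fun x : ℝ => Complex.exp ((n * x : ℝ) * Complex.I)) := by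
  fun_prop

lemma cF_norm_le (μ : Measure ℝ) [IsProbabilityMeasure μ] (n : ℕ) : ‖cF μ n‖ ≤ 1 := by
  rw [cF]
  have h := norm_integral_le_of_norm_le_const (μ := μ) (C := 1)
    (f := fun x : ℝ => Complex.exp ((n * x : ℝ) * Complex.I))
    (Filter.Eventually.of_forall fun x => (norm_exp_eq _).le)
  simpa using h

lemma cf_integrable (μ : Measure ℝ) [IsProbabilityMeasure μ] (n : ℕ) :
    Integrable (fun x : ℝ => Complex.exp ((n * x : ℝ) * Complex.I)) μ := by
  refine (integrable_const (1:ℝ)).mono' ((cf_cont n).aestronglyMeasurable) ?_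
  filter_upwards with x
  rw [norm_exp_eq]

lemma aF_eq (μ : Measure ℝ) [IsProbabilityMeasure μ] (n : ℕ) :
    aF μ n = (1/π) * (cF μ n).re := by
  have h := integral_re (μ := μ) (𝕜 := ℂ) (cf_integrable μ n)
  simp only [RCLike.re_to_complex] at h
  rw [aF, cF, ← h]
  congr 1
  refine integral_congr_ae (Filter.Eventually.of_forall fun x => ?_)
  exact (Complex.exp_ofReal_mul_I_re _).symm

lemma bF_eq (μ : Measure ℝ) [IsProbabilityMeasure μ] (n : ℕ) :
    bF μ n = (1/π) * (cF μ n).im := by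
  have h := integral_im (μ := μ) (𝕜 := ℂ) (cf_integrable μ n)
  simp only [RCLike.im_to_complex] at h
  rw [bF, cF, ← h]
  congr 1
  refine integral_congr_ae (Filter.Eventually.of_forall fun x => ?_)
  exact (Complex.exp_ofReal_mul_I_im _).symm

lemma sq_eq (μ : Measure ℝ) [IsProbabilityMeasure μ] (n : ℕ) :
    aF μ n ^ 2 + bF μ n ^ 2 = (1/π)^2 * ‖cF μ n‖^2 := by
  rw [aF_eq, bF_eq]
  have h : ‖cF μ n‖^2 = (cF μ n).re^2 + (cF μ n).im^2 := by
    rw [Complex.sq_norm, Complex.normSq_apply]; ring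
  rw [h]; ring

lemma wrap_measurable : Measurable fun p : ℝ × ℝ => wrap (p.1 + p.2) := by
  unfold wrap
  exact measurable_const.mul (measurable_fract.comp
    ((measurable_fst.add measurable_snd).div_const _))

lemma cF_conv (μ ν : Measure ℝ) [IsProbabilityMeasure μ] [IsProbabilityMeasure ν] (n : ℕ) :
    cF (cconv μ ν) n = cF μ n * cF ν n := by
  rw [cF, cconv, integral_map wrap_measurable.aemeasurable ((cf_cont n).aestronglyMeasurable)]
  have key : ∀ p : ℝ × ℝ, Complex.exp ((n * wrap (p.1+p.2) : ℝ) * Complex.I)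
      = Complex.exp ((n*p.1 : ℝ) * Complex.I) * Complex.exp ((n*p.2 : ℝ) * Complex.I) := by
    intro p
    rw [← Complex.exp_add]
    have hπ : (2*π) ≠ 0 := by positivity
    have hw2 : wrap (p.1+p.2) = p.1 + p.2 - 2*π * ⌊(p.1+p.2)/(2*π)⌋ := by
      rw [wrap, Int.fract]
      field_simp
    rw [hw2]
    set m : ℤ := ⌊(p.1+p.2)/(2*π)⌋
    have h3 : ((n * (p.1 + p.2 - 2*π*m) : ℝ) : ℂ) * Complex.I
        = ((n*p.1 : ℝ) * Complex.I + (n*p.2 : ℝ) * Complex.I)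
          + (((-(n*m) : ℤ) : ℂ)) * (2*(π:ℂ)*Complex.I) := by
      push_cast; ring
    rw [h3, Complex.exp_add, Complex.exp_int_mul_two_pi_mul_I, mul_one]
  simp_rw [key]
  exact integral_prod_mul (fun a : ℝ => Complex.exp ((n*a : ℝ) * Complex.I))
    (fun a : ℝ => Complex.exp ((n*a : ℝ) * Complex.I))

lemma term_nonneg (μ : Measure ℝ) (k : ℕ) :
    0 ≤ (aF μ (k+2)^2 + bF μ (k+2)^2) / (((k:ℝ)+2)^2 - 1) := by
  have hd : (0:ℝ) < ((k:ℝ)+2)^2 - 1 := by nlinarith [Nat.cast_nonneg (α := ℝ) k]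
  positivity

lemma summable_term (μ : Measure ℝ) [IsProbabilityMeasure μ] :
    Summable (fun k : ℕ => (aF μ (k+2)^2 + bF μ (k+2)^2) / (((k:ℝ)+2)^2 - 1)) := by
  have hbase : Summable (fun k : ℕ => (1/π)^2 * (1 / ((k:ℝ)+1)^2)) := by
    have h1 : Summable (fun n : ℕ => 1 / ((n:ℝ))^2) :=
      Real.summable_one_div_nat_pow.mpr one_lt_two
    have h2 : Summable (fun k : ℕ => 1 / ((k:ℝ)+1)^2) := by
      have h3 := (summable_nat_add_iff (f := fun n : ℕ => 1 / ((n:ℝ))^2) 1).mpr h1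
      refine h3.congr fun k => ?_
      push_cast
      ring
    exact h2.mul_left _
  refine Summable.of_nonneg_of_le (fun k => term_nonneg μ k) (fun k => ?_) hbase
  have hd : (0:ℝ) < ((k:ℝ)+2)^2 - 1 := by nlinarith [Nat.cast_nonneg (α := ℝ) k]
  have hd2 : (0:ℝ) < ((k:ℝ)+1)^2 := by positivity
  have hπ2 : (0:ℝ) < (1/π)^2 := by positivity
  have hnum : aF μ (k+2)^2 + bF μ (k+2)^2 ≤ (1/π)^2 := by
    rw [sq_eq]
    have h1 : ‖cF μ (k+2)‖^2 ≤ 1 := by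
      have h2 := cF_norm_le μ (k+2)
      nlinarith [norm_nonneg (cF μ (k+2))]
    nlinarith
  calc (aF μ (k+2)^2 + bF μ (k+2)^2) / (((k:ℝ)+2)^2 - 1)
      ≤ (1/π)^2 / (((k:ℝ)+2)^2 - 1) := (div_le_div_iff_of_pos_right hd).mpr hnum
    _ ≤ (1/π)^2 / ((k:ℝ)+1)^2 := by
        apply div_le_div_of_nonneg_left hπ2.le hd2
        nlinarith [Nat.cast_nonneg (α := ℝ) k]
    _ = (1/π)^2 * (1 / ((k:ℝ)+1)^2) := by ring

lemma areaH_le_conv (μ σ : Measure ℝ) [IsProbabilityMeasure μ]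
    (hb : ∀ n : ℕ, aF σ n ^ 2 + bF σ n ^ 2 ≤ aF μ n ^ 2 + bF μ n ^ 2) :
    areaH μ ≤ areaH σ := by
  unfold areaH
  have hle : ∀ k : ℕ, (aF σ (k+2)^2 + bF σ (k+2)^2) / (((k:ℝ)+2)^2 - 1)
      ≤ (aF μ (k+2)^2 + bF μ (k+2)^2) / (((k:ℝ)+2)^2 - 1) := by
    intro k
    have hd : (0:ℝ) < ((k:ℝ)+2)^2 - 1 := by nlinarith [Nat.cast_nonneg (α := ℝ) k]
    exact (div_le_div_iff_of_pos_right hd).mpr (hb (k+2))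
  have hσs : Summable (fun k : ℕ => (aF σ (k+2)^2 + bF σ (k+2)^2) / (((k:ℝ)+2)^2 - 1)) :=
    Summable.of_nonneg_of_le (fun k => term_nonneg σ k) hle (summable_term μ)
  have hts := Summable.tsum_le_tsum hle hσs (summable_term μ)
  have hπ : (0:ℝ) ≤ π/2 := by positivity
  have := mul_le_mul_of_nonneg_left hts hπ
  linarith

theorem stmt8 (μ ν : Measure ℝ) [IsProbabilityMeasure μ] [IsProbabilityMeasure ν]
    (hμs : μ (Set.Ico 0 (2*π))ᶜ = 0) (hνs : ν (Set.Ico 0 (2*π))ᶜ = 0)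
    (hμ0 : ∫ x, Complex.exp (Complex.I * x) ∂μ = 0)
    (hν0 : ∫ x, Complex.exp (Complex.I * x) ∂ν = 0) :
    max (areaH μ) (areaH ν) ≤ areaH (cconv μ ν) := by
  have hinst : IsProbabilityMeasure (cconv μ ν) :=
    Measure.isProbabilityMeasure_map wrap_measurable.aemeasurable
  have hsq : ∀ n : ℕ, aF (cconv μ ν) n ^ 2 + bF (cconv μ ν) n ^ 2
      = (1/π)^2 * (‖cF μ n‖^2 * ‖cF ν n‖^2) := by
    intro n
    rw [sq_eq, cF_conv, norm_mul, mul_pow]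
  have key : ∀ (ρ τ : Measure ℝ) [IsProbabilityMeasure ρ] [IsProbabilityMeasure τ],
      (∀ n, aF (cconv μ ν) n ^ 2 + bF (cconv μ ν) n ^ 2
        = (1/π)^2 * (‖cF ρ n‖^2 * ‖cF τ n‖^2)) → areaH ρ ≤ areaH (cconv μ ν) := by
    intro ρ τ _ _ h
    refine areaH_le_conv ρ _ fun n => ?_
    rw [h n, sq_eq]
    have h1 : ‖cF τ n‖^2 ≤ 1 := by
      have h2 := cF_norm_le τ n
      nlinarith [norm_nonneg (cF τ n)]
    have h2 : ‖cF ρ n‖^2 * ‖cF τ n‖^2 ≤ ‖cF ρ n‖^2 :=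
      mul_le_of_le_one_right (sq_nonneg _) h1
    exact mul_le_mul_of_nonneg_left h2 (sq_nonneg _)
  refine max_le (key μ ν hsq) (key ν μ fun n => ?_)
  rw [hsq n]; ring
end

section
/- Let ν ∈ M⁰_T, θ ∈ [0,2π], and let ν(θ) be the law of X_ν + θ mod 2π and the reflected measure ←ν(θ) the law of −(X_ν + θ) mod 2π. Then the symmetrised measure S(ν(θ)) = ½(ν(θ) + ←ν(θ)) belongs to M⁰_T, and A(S(ν(θ))) ≥ A(ν). -/
open MeasureTheory Real Set ENNReal

lemma measurable_wrap : Measurable wrap :=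
  (measurable_fract.comp (measurable_id.div_const _)).const_mul _

lemma wrap_mem (x : ℝ) : wrap x ∈ Set.Ico 0 (2*π) := by
  have h2 : (0:ℝ) < 2*π := by positivity
  constructor
  · exact mul_nonneg h2.le (Int.fract_nonneg _)
  · have := Int.fract_lt_one (x / (2*π))
    calc wrap x < 2*π*1 := mul_lt_mul_of_pos_left this h2
    _ = 2*π := mul_one _

lemma wrap_eq (y : ℝ) : wrap y = y - 2*π * ⌊y/(2*π)⌋ := by
  have h2 : (2*π) ≠ 0 := by positivity
  unfold wrap
  rw [Int.fract]
  field_simp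

lemma cos_nat_wrap (k : ℕ) (y : ℝ) : Real.cos (k * wrap y) = Real.cos (k * y) := by
  rw [wrap_eq]
  have : (k:ℝ) * (y - 2*π*⌊y/(2*π)⌋) = k*y + ((-(k*⌊y/(2*π)⌋) : ℤ):ℝ) * (2*π) := by
    push_cast; ring
  rw [this, Real.cos_add_int_mul_two_pi]

lemma sin_nat_wrap (k : ℕ) (y : ℝ) : Real.sin (k * wrap y) = Real.sin (k * y) := by
  rw [wrap_eq]
  have : (k:ℝ) * (y - 2*π*⌊y/(2*π)⌋) = k*y + ((-(k*⌊y/(2*π)⌋) : ℤ):ℝ) * (2*π) := by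
    push_cast; ring
  rw [this, Real.sin_add_int_mul_two_pi]

lemma exp_wrap (y : ℝ) : Complex.exp (Complex.I * wrap y) = Complex.exp (Complex.I * y) := by
  rw [wrap_eq]
  have : Complex.I * ((y - 2*π*⌊y/(2*π)⌋ : ℝ) : ℂ)
       = Complex.I * y + ((-⌊y/(2*π)⌋ : ℤ):ℂ) * (2*π*Complex.I) := by push_cast; ring
  rw [this, Complex.exp_add, Complex.exp_int_mul_two_pi_mul_I, mul_one]

lemma integrable_cos_k (μ : Measure ℝ) [IsFiniteMeasure μ] (c : ℝ) :
    Integrable (fun x => Real.cos (c * x)) μ :=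
  Integrable.mono' (integrable_const 1)
    ((Real.continuous_cos.comp (continuous_const.mul continuous_id)).aestronglyMeasurable)
    (ae_of_all _ fun x => by simpa using Real.abs_cos_le_one (c*x))

lemma integrable_sin_k (μ : Measure ℝ) [IsFiniteMeasure μ] (c : ℝ) :
    Integrable (fun x => Real.sin (c * x)) μ :=
  Integrable.mono' (integrable_const 1)
    ((Real.continuous_sin.comp (continuous_const.mul continuous_id)).aestronglyMeasurable)
    (ae_of_all _ fun x => by simpa using Real.abs_sin_le_one (c*x))

lemma integrable_exp_I (μ : Measure ℝ) [IsFiniteMeasure μ] :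
    Integrable (fun x : ℝ => Complex.exp (Complex.I * x)) μ :=
  Integrable.mono' (integrable_const 1)
    ((Complex.continuous_exp.comp (continuous_const.mul Complex.continuous_ofReal)).aestronglyMeasurable)
    (ae_of_all _ fun x => by simp [Complex.norm_exp])

theorem stmt13 (ν : Measure ℝ) [IsProbabilityMeasure ν]
    (hνs : ν (Set.Ico 0 (2*π))ᶜ = 0)
    (hν0 : ∫ x, Complex.exp (Complex.I * x) ∂ν = 0)
    (θ : ℝ) (hθ : θ ∈ Set.Icc 0 (2*π))
    (S : Measure ℝ)
    (hS : S = (1/2 : ℝ≥0∞) • Measure.map (fun x => wrap (x + θ)) ν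
            + (1/2 : ℝ≥0∞) • Measure.map (fun x => wrap (-(x + θ))) ν) :
    IsProbabilityMeasure S
    ∧ S (Set.Ico 0 (2*π))ᶜ = 0
    ∧ (∫ x, Complex.exp (Complex.I * x) ∂S = 0)
    ∧ areaH ν ≤ areaH S := by
  have hπ : (0:ℝ) < π := Real.pi_pos
  have hm1 : Measurable (fun x : ℝ => wrap (x + θ)) :=
    measurable_wrap.comp (measurable_id.add_const θ)
  have hm2 : Measurable (fun x : ℝ => wrap (-(x + θ))) :=
    measurable_wrap.comp (measurable_id.add_const θ).neg
  set μ1 := Measure.map (fun x : ℝ => wrap (x + θ)) ν with hμ1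
  set μ2 := Measure.map (fun x : ℝ => wrap (-(x + θ))) ν with hμ2
  have i1 : IsProbabilityMeasure μ1 := Measure.isProbabilityMeasure_map hm1.aemeasurable
  have i2 : IsProbabilityMeasure μ2 := Measure.isProbabilityMeasure_map hm2.aemeasurable
  have htop : (1/2 : ℝ≥0∞) ≠ ⊤ := by norm_num
  -- Part 1
  have hprob : IsProbabilityMeasure S := by
    constructor
    rw [hS]
    simp [Measure.add_apply, Measure.smul_apply, smul_eq_mul, measure_univ,
      ENNReal.add_halves]
    exact ENNReal.inv_two_add_inv_two
  -- Part 2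
  have h1c : μ1 (Set.Ico 0 (2*π))ᶜ = 0 := by
    rw [hμ1, Measure.map_apply hm1 measurableSet_Ico.compl]
    have he : (fun x : ℝ => wrap (x + θ)) ⁻¹' (Set.Ico 0 (2*π))ᶜ = ∅ := by
      ext x; simpa using wrap_mem (x + θ)
    rw [he, measure_empty]
  have h2c : μ2 (Set.Ico 0 (2*π))ᶜ = 0 := by
    rw [hμ2, Measure.map_apply hm2 measurableSet_Ico.compl]
    have he : (fun x : ℝ => wrap (-(x + θ))) ⁻¹' (Set.Ico 0 (2*π))ᶜ = ∅ := by
      ext x; simpa using wrap_mem (-(x + θ))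
    rw [he, measure_empty]
  have hSc : S (Set.Ico 0 (2*π))ᶜ = 0 := by
    rw [hS]
    simp [Measure.add_apply, Measure.smul_apply, h1c, h2c]
  -- Part 3
  have hexc : Continuous fun y : ℝ => Complex.exp (Complex.I * y) :=
    Complex.continuous_exp.comp (continuous_const.mul Complex.continuous_ofReal)
  have e1 : ∫ x, Complex.exp (Complex.I * x) ∂μ1 = 0 := by
    rw [hμ1, integral_map hm1.aemeasurable hexc.aestronglyMeasurable]
    simp only [exp_wrap]
    have h : ∀ x : ℝ, Complex.exp (Complex.I * ((x+θ:ℝ):ℂ))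
        = Complex.exp (Complex.I * x) * Complex.exp (Complex.I * θ) := by
      intro x; rw [← Complex.exp_add]; congr 1; push_cast; ring
    simp only [h]
    rw [integral_mul_const, hν0, zero_mul]
  have hconj : ∫ x, Complex.exp (-(Complex.I * x)) ∂ν = 0 := by
    have h : ∀ x : ℝ, Complex.exp (-(Complex.I * x))
        = (starRingEnd ℂ) (Complex.exp (Complex.I * x)) := by
      intro x; rw [← Complex.exp_conj]; congr 1; simp
    simp only [h]
    rw [integral_conj, hν0, map_zero]
  have e2 : ∫ x, Complex.exp (Complex.I * x) ∂μ2 = 0 := by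
    rw [hμ2, integral_map hm2.aemeasurable hexc.aestronglyMeasurable]
    simp only [exp_wrap]
    have h : ∀ x : ℝ, Complex.exp (Complex.I * ((-(x+θ):ℝ):ℂ))
        = Complex.exp (-(Complex.I * x)) * Complex.exp (-(Complex.I * θ)) := by
      intro x; rw [← Complex.exp_add]; congr 1; push_cast; ring
    simp only [h]
    rw [integral_mul_const, hconj, zero_mul]
  have hint3 : ∫ x, Complex.exp (Complex.I * x) ∂S = 0 := by
    rw [hS, integral_add_measure ((integrable_exp_I μ1).smul_measure htop)
      ((integrable_exp_I μ2).smul_measure htop),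
      integral_smul_measure, integral_smul_measure, e1, e2]
    simp
  -- Part 4
  have key : ∀ m : ℕ, aF S m ^ 2 + bF S m ^ 2 ≤ aF ν m ^ 2 + bF ν m ^ 2 := by
    intro m
    have hcc : Continuous fun y : ℝ => Real.cos ((m:ℝ) * y) :=
      Real.continuous_cos.comp (continuous_const.mul continuous_id)
    have hsc : Continuous fun y : ℝ => Real.sin ((m:ℝ) * y) :=
      Real.continuous_sin.comp (continuous_const.mul continuous_id)
    set c := Real.cos (m * θ) with hc
    set s := Real.sin (m * θ) with hs
    have hces : ∀ x : ℝ, Real.cos ((m:ℝ)*(x+θ)) = Real.cos ((m:ℝ)*x) * c - Real.sin ((m:ℝ)*x) * s := by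
      intro x; rw [show (m:ℝ)*(x+θ) = (m:ℝ)*x + (m:ℝ)*θ by ring, Real.cos_add]
    have hses : ∀ x : ℝ, Real.sin ((m:ℝ)*(x+θ)) = Real.sin ((m:ℝ)*x) * c + Real.cos ((m:ℝ)*x) * s := by
      intro x; rw [show (m:ℝ)*(x+θ) = (m:ℝ)*x + (m:ℝ)*θ by ring, Real.sin_add]
    have hc1 : ∫ x, Real.cos ((m:ℝ) * x) ∂μ1 = ∫ x, Real.cos ((m:ℝ)*(x+θ)) ∂ν := by
      rw [hμ1, integral_map hm1.aemeasurable hcc.aestronglyMeasurable]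
      simp only [cos_nat_wrap]
    have hc2 : ∫ x, Real.cos ((m:ℝ) * x) ∂μ2 = ∫ x, Real.cos ((m:ℝ)*(x+θ)) ∂ν := by
      rw [hμ2, integral_map hm2.aemeasurable hcc.aestronglyMeasurable]
      simp only [cos_nat_wrap, mul_neg, Real.cos_neg]
    have hs1 : ∫ x, Real.sin ((m:ℝ) * x) ∂μ1 = ∫ x, Real.sin ((m:ℝ)*(x+θ)) ∂ν := by
      rw [hμ1, integral_map hm1.aemeasurable hsc.aestronglyMeasurable]
      simp only [sin_nat_wrap]
    have hs2 : ∫ x, Real.sin ((m:ℝ) * x) ∂μ2 = - ∫ x, Real.sin ((m:ℝ)*(x+θ)) ∂ν := by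
      rw [hμ2, integral_map hm2.aemeasurable hsc.aestronglyMeasurable]
      simp only [sin_nat_wrap, mul_neg, Real.sin_neg]
      rw [integral_neg]
    have hA : ∫ x, Real.cos ((m:ℝ) * x) ∂S = ∫ x, Real.cos ((m:ℝ)*(x+θ)) ∂ν := by
      rw [hS, integral_add_measure ((integrable_cos_k μ1 m).smul_measure htop)
        ((integrable_cos_k μ2 m).smul_measure htop),
        integral_smul_measure, integral_smul_measure, hc1, hc2]
      simp only [smul_eq_mul]
      norm_num
      ring
    have hB : ∫ x, Real.sin ((m:ℝ) * x) ∂S = 0 := by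
      rw [hS, integral_add_measure ((integrable_sin_k μ1 m).smul_measure htop)
        ((integrable_sin_k μ2 m).smul_measure htop),
        integral_smul_measure, integral_smul_measure, hs1, hs2]
      simp only [smul_eq_mul]
      norm_num
    have hval : ∫ x, Real.cos ((m:ℝ)*(x+θ)) ∂ν
        = (∫ x, Real.cos ((m:ℝ)*x) ∂ν) * c - (∫ x, Real.sin ((m:ℝ)*x) ∂ν) * s := by
      simp only [hces]
      rw [integral_sub ((integrable_cos_k ν m).mul_const c) ((integrable_sin_k ν m).mul_const s),
        integral_mul_const, integral_mul_const]
    have haS : aF S m = (1/π) * ((∫ x, Real.cos ((m:ℝ)*x) ∂ν) * c - (∫ x, Real.sin ((m:ℝ)*x) ∂ν) * s) := by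
      rw [aF, hA, hval]
    have hbS : bF S m = 0 := by rw [bF, hB, mul_zero]
    rw [haS, hbS, aF, bF]
    set α := ∫ x, Real.cos ((m:ℝ)*x) ∂ν
    set β := ∫ x, Real.sin ((m:ℝ)*x) ∂ν
    have hcs : s^2 + c^2 = 1 := Real.sin_sq_add_cos_sq _
    nlinarith [sq_nonneg (α*s + β*c), sq_nonneg (1/π), sq_nonneg α, sq_nonneg β,
      mul_nonneg (sq_nonneg (1/π)) (sq_nonneg (α*s + β*c))]
  -- bounds and summability
  have hbound : ∀ (μ : Measure ℝ), IsProbabilityMeasure μ →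
      ∀ m : ℕ, aF μ m ^ 2 + bF μ m ^ 2 ≤ 2/π^2 := by
    intro μ hμ m
    have ha : |∫ x, Real.cos ((m:ℝ)*x) ∂μ| ≤ 1 := by
      have := norm_integral_le_of_norm_le_const (μ := μ)
        (f := fun x => Real.cos ((m:ℝ)*x)) (C := 1)
        (ae_of_all _ fun x => by simpa using Real.abs_cos_le_one ((m:ℝ)*x))
      simpa [measure_univ] using this
    have hb : |∫ x, Real.sin ((m:ℝ)*x) ∂μ| ≤ 1 := by
      have := norm_integral_le_of_norm_le_const (μ := μ)
        (f := fun x => Real.sin ((m:ℝ)*x)) (C := 1)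
        (ae_of_all _ fun x => by simpa using Real.abs_sin_le_one ((m:ℝ)*x))
      simpa [measure_univ] using this
    rw [aF, bF]
    have h1 : (∫ x, Real.cos ((m:ℝ)*x) ∂μ)^2 ≤ 1 := by
      nlinarith [sq_abs (∫ x, Real.cos ((m:ℝ)*x) ∂μ), abs_nonneg (∫ x, Real.cos ((m:ℝ)*x) ∂μ)]
    have h2 : (∫ x, Real.sin ((m:ℝ)*x) ∂μ)^2 ≤ 1 := by
      nlinarith [sq_abs (∫ x, Real.sin ((m:ℝ)*x) ∂μ), abs_nonneg (∫ x, Real.sin ((m:ℝ)*x) ∂μ)]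
    have hp2 : (0:ℝ) < π^2 := by positivity
    rw [mul_pow, mul_pow]
    have : (1/π)^2 = 1/π^2 := by rw [div_pow]; norm_num
    rw [this]
    rw [div_mul_eq_mul_div, div_mul_eq_mul_div, ← add_div, div_le_div_iff₀ hp2 hp2]
    nlinarith
  have hdpos : ∀ k : ℕ, (0:ℝ) < ((k:ℝ)+2)^2 - 1 := by
    intro k; nlinarith [Nat.cast_nonneg (α := ℝ) k]
  have hg : Summable (fun k : ℕ => (2/π^2) * (1/((k:ℝ)+1)^2)) := by
    apply Summable.mul_left
    have h0 : Summable (fun n : ℕ => 1/((n:ℝ))^2) := summable_one_div_nat_pow.mpr one_lt_two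
    have := (summable_nat_add_iff 1).mpr h0
    refine this.congr fun n => ?_
    push_cast
    ring_nf
  have hleν : ∀ k : ℕ, (aF ν (k+2)^2 + bF ν (k+2)^2) / (((k:ℝ)+2)^2 - 1)
      ≤ (2/π^2) * (1/((k:ℝ)+1)^2) := by
    intro k
    rw [mul_one_div]
    apply div_le_div₀ (by positivity) (hbound ν inferInstance (k+2)) (by positivity)
    nlinarith [Nat.cast_nonneg (α := ℝ) k]
  have hsumν : Summable (fun k : ℕ => (aF ν (k+2)^2 + bF ν (k+2)^2) / (((k:ℝ)+2)^2 - 1)) :=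
    Summable.of_nonneg_of_le (fun k => div_nonneg (by positivity) (hdpos k).le) hleν hg
  have hterm : ∀ k : ℕ, (aF S (k+2)^2 + bF S (k+2)^2) / (((k:ℝ)+2)^2 - 1)
      ≤ (aF ν (k+2)^2 + bF ν (k+2)^2) / (((k:ℝ)+2)^2 - 1) := by
    intro k
    exact div_le_div_of_nonneg_right (key (k+2)) (hdpos k).le
  have hsumS : Summable (fun k : ℕ => (aF S (k+2)^2 + bF S (k+2)^2) / (((k:ℝ)+2)^2 - 1)) :=
    Summable.of_nonneg_of_le (fun k => div_nonneg (by positivity) (hdpos k).le) hterm hsumν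
  have htsum := Summable.tsum_le_tsum hterm hsumS hsumν
  refine ⟨hprob, hSc, hint3, ?_⟩
  rw [areaH, areaH]
  have h4 := mul_le_mul_of_nonneg_left htsum (by positivity : (0:ℝ) ≤ π/2)
  linarith
end
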